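/- There is no distributive law of the finite powerset monad over the coinductive delay monad: no natural transformation ζ : P_f ∘ D → D ∘ P_f satisfies the four axioms of a distributive law. -/

import Mathlib

attribute [local instance] Classical.propDecidable

/-- The coinductive delay monad: `D X` is the final coalgebra of `Y ↦ X ⊕ Y`.
Concretely, an element of `D X` either diverges (`none`), or is of the form
`step^n (now x)`, represented as `some (n, x)`. -/
def Delay (X : Type) : Type := Option (ℕ × X)

namespace Delay

/-- `now : X → D X`. -/
def now {X : Type} (x : X) : Delay X := some (0, x)

/-- `step : D X → D X`. -/
def step {X : Type} : Delay X → Delay X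
  | none => none
  | some (n, x) => some (n + 1, x)

/-- The divergent computation, `fix step`. -/
def diverge {X : Type} : Delay X := none

/-- Functorial action of `D`. -/
def map {X Y : Type} (f : X → Y) : Delay X → Delay Y
  | none => none
  | some (n, x) => some (n, f x)

/-- Monad multiplication `μ : D(D X) → D X`, satisfying `μ (now d) = d` and
`μ (step d) = step (μ d)`. -/
def mu {X : Type} : Delay (Delay X) → Delay X
  | none => none
  | some (_, none) => none
  | some (n, some (m, x)) => some (n + m, x)

end Delay

set_option linter.unnecessarySimpa false

private theorem finsetBool_cases (u : Finset Bool) :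
    u = ∅ ∨ u = {false} ∨ u = {true} ∨ u = {false, true} := by
  by_cases hf : false ∈ u <;> by_cases ht : true ∈ u
  · right; right; right; ext b; cases b <;> simp [hf, ht]
  · right; left; ext b; cases b <;> simp [hf, ht]
  · right; right; left; ext b; cases b <;> simp [hf, ht]
  · left; ext b; cases b <;> simp [hf, ht]

/-- There is no distributive law of the finite powerset monad (the free semilattice monad,
with unit `x ↦ {x}`, functorial action `image`, and multiplication `biUnion id`) over the
coinductive delay monad: no natural transformation `ζ : P_f ∘ D → D ∘ P_f` satisfies the
two unit axioms and the two multiplication axioms of a distributive law. -/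
theorem no_distributive_law_finset_over_delay :
    ¬ ∃ ζ : ∀ X : Type, Finset (Delay X) → Delay (Finset X),
      -- naturality
      (∀ (X Y : Type) (f : X → Y) (s : Finset (Delay X)),
          ζ Y (s.image (Delay.map f)) = Delay.map (fun u => u.image f) (ζ X s)) ∧
      -- ζ ∘ η^{P_f} D = D η^{P_f}
      (∀ (X : Type) (d : Delay X),
          ζ X {d} = Delay.map (fun x => ({x} : Finset X)) d) ∧
      -- ζ ∘ P_f η^D = η^D P_f
      (∀ (X : Type) (s : Finset X), ζ X (s.image Delay.now) = Delay.now s) ∧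
      -- ζ ∘ μ^{P_f} D = D μ^{P_f} ∘ ζ P_f ∘ P_f ζ
      (∀ (X : Type) (s : Finset (Finset (Delay X))),
          ζ X (s.biUnion id)
            = Delay.map (fun u : Finset (Finset X) => u.biUnion id)
                (ζ (Finset X) (s.image (ζ X)))) ∧
      -- ζ ∘ P_f μ^D = μ^D P_f ∘ D ζ ∘ ζ D
      (∀ (X : Type) (s : Finset (Delay (Delay X))),
          ζ X (s.image Delay.mu)
            = Delay.mu (Delay.map (ζ X) (ζ (Delay X) s))) := by
  rintro ⟨ζ, nat, u1, u2, m1, m2⟩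
  -- naturality specialized to the generic two-element set
  have key : ∀ (X : Type) (f : Bool → X),
      ζ X {Delay.now (f false), Delay.step (Delay.now (f true))}
        = Delay.map (fun u => u.image f)
            (ζ Bool {Delay.now false, Delay.step (Delay.now true)}) := by
    intro X f
    have h := nat Bool X f {Delay.now false, Delay.step (Delay.now true)}
    have himg : Finset.image (Delay.map f) {Delay.now false, Delay.step (Delay.now true)}
        = {Delay.now (f false), Delay.step (Delay.now (f true))} := by
      rw [Finset.image_insert, Finset.image_singleton]; rfl
    rw [himg] at h
    exact h
  -- E1 : for each x : Bool, one equation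
  have E1 : ∀ x : Bool,
      (some (1, ({x} : Finset Bool)) : Delay (Finset Bool))
        = Delay.mu (Delay.map (ζ Bool)
            (ζ (Delay Bool) {Delay.now (Delay.step (Delay.now x)),
                             Delay.step (Delay.now (Delay.now x))})) := by
    intro x
    have h := m2 Bool {Delay.now (Delay.step (Delay.now x)),
                       Delay.step (Delay.now (Delay.now x))}
    have himg : Finset.image Delay.mu
        ({Delay.now (Delay.step (Delay.now x)), Delay.step (Delay.now (Delay.now x))} :
          Finset (Delay (Delay Bool)))
        = {Delay.step (Delay.now x)} := by
      rw [Finset.image_insert, Finset.image_singleton]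
      exact Finset.insert_eq_of_mem (Finset.mem_singleton_self _)
    rw [himg] at h
    have hs := u1 Bool (Delay.step (Delay.now x))
    rw [hs] at h
    have : Delay.map (fun y => ({y} : Finset Bool)) (Delay.step (Delay.now x))
        = some (1, ({x} : Finset Bool)) := by
      rfl
    rw [this] at h
    exact h
  -- express the inner ζ via key
  have inner : ∀ x : Bool,
      ζ (Delay Bool) {Delay.now (Delay.step (Delay.now x)),
                      Delay.step (Delay.now (Delay.now x))}
        = Delay.map (fun u => u.image (fun t => bif t then Delay.now x
              else Delay.step (Delay.now x)))
            (ζ Bool {Delay.now false, Delay.step (Delay.now true)}) := by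
    intro x
    exact key (Delay Bool) (fun t => bif t then Delay.now x else Delay.step (Delay.now x))
  -- case on F0
  rcases hF0 : ζ Bool {Delay.now false, Delay.step (Delay.now true)} with _ | ⟨k, u0⟩
  · have h := E1 false
    rw [inner false, hF0] at h
    simp [Delay.map, Delay.mu] at h
  · rcases finsetBool_cases u0 with h0 | h0 | h0 | h0
    all_goals subst h0
    -- u0 = ∅
    · have h1 := E1 false
      have h2 := E1 true
      rw [inner false, hF0] at h1
      rw [inner true, hF0] at h2
      simp only [Finset.image_empty, Delay.map] at h1 h2
      rw [← h2] at h1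
      simp at h1
    -- u0 = {false} : value is the "step" element, forces k = 0
    · have h1 := E1 false
      rw [inner false, hF0] at h1
      have himg : Finset.image (fun t => bif t then Delay.now false
            else Delay.step (Delay.now false)) ({false} : Finset Bool)
          = {Delay.step (Delay.now false)} := by simp
      simp only [Delay.map, himg] at h1
      rw [u1 Bool (Delay.step (Delay.now false))] at h1
      simp [Delay.map, Delay.mu, Delay.now, Delay.step] at h1
      -- h1 : k = 0 (hopefully)
      -- now E2
      have hE2 := m2 Bool {Delay.now (some (1, true)),
                           Delay.step (Delay.now (Delay.now false))}
      have himg2 : Finset.image Delay.mu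
          ({Delay.now (some (1, true)), Delay.step (Delay.now (Delay.now false))} :
            Finset (Delay (Delay Bool)))
          = {some (1, true), some (1, false)} := by
        exact (Finset.image_insert _ _ _).trans (congrArg _ (Finset.image_singleton _ _))
      rw [himg2] at hE2
      have hinner2 : ζ (Delay Bool) {Delay.now (some (1, true)),
                           Delay.step (Delay.now (Delay.now false))}
          = Delay.map (fun u => u.image (fun t => bif t then Delay.now false
                else (some (1, true) : Delay Bool)))
              (ζ Bool {Delay.now false, Delay.step (Delay.now true)}) := by
        have := key (Delay Bool)
          (fun t => bif t then Delay.now false else (some (1, true) : Delay Bool))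
        exact this
      rw [hinner2, hF0] at hE2
      have himg3 : Finset.image (fun t => bif t then Delay.now false
            else (some (1, true) : Delay Bool)) ({false} : Finset Bool)
          = {(some (1, true) : Delay Bool)} := by rw [Finset.image_singleton]; rfl
      simp only [Delay.map, himg3] at hE2
      have hu : ζ Bool {(some (1, true) : Delay Bool)} = some (1, ({true} : Finset Bool)) :=
        u1 Bool (Delay.step (Delay.now true))
      simp only [hu] at hE2
      simp only [Delay.map, Delay.mu, Delay.now, Delay.step, h1] at hE2
      -- hE2 : ζ Bool {some (1,true), some(1,false)} = some (1, {true})  (k=0 so 0+1)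
      -- swap naturality
      have hsw := nat Bool Bool (fun b => !b) {(some (1, true) : Delay Bool), some (1, false)}
      have himg4 : Finset.image (Delay.map (fun b => !b))
          ({(some (1, true) : Delay Bool), some (1, false)} : Finset (Delay Bool))
          = {some (1, true), some (1, false)} := by
        exact (Finset.image_insert _ _ _).trans
          ((congrArg _ (Finset.image_singleton _ _)).trans (Finset.pair_comm _ _))
      rw [himg4, hE2] at hsw
      simp only [Delay.map] at hsw
      injection hsw with hp
      injection hp with _ hq
      simpa using hq
    -- u0 = {true} : value is the "now" element, forces k = 1
    · have h1 := E1 false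
      rw [inner false, hF0] at h1
      have himg : Finset.image (fun t => bif t then Delay.now false
            else Delay.step (Delay.now false)) ({true} : Finset Bool)
          = {Delay.now false} := by simp
      simp only [Delay.map, himg] at h1
      rw [u1 Bool (Delay.now false)] at h1
      simp [Delay.map, Delay.mu, Delay.now, Delay.step] at h1
      -- h1 : 1 = k
      have hE2 := m2 Bool {Delay.now (some (1, true)),
                           Delay.step (Delay.now (Delay.now false))}
      have himg2 : Finset.image Delay.mu
          ({Delay.now (some (1, true)), Delay.step (Delay.now (Delay.now false))} :
            Finset (Delay (Delay Bool)))
          = {some (1, true), some (1, false)} := by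
        exact (Finset.image_insert _ _ _).trans (congrArg _ (Finset.image_singleton _ _))
      rw [himg2] at hE2
      have hinner2 : ζ (Delay Bool) {Delay.now (some (1, true)),
                           Delay.step (Delay.now (Delay.now false))}
          = Delay.map (fun u => u.image (fun t => bif t then Delay.now false
                else (some (1, true) : Delay Bool)))
              (ζ Bool {Delay.now false, Delay.step (Delay.now true)}) := by
        have := key (Delay Bool)
          (fun t => bif t then Delay.now false else (some (1, true) : Delay Bool))
        exact this
      rw [hinner2, hF0] at hE2
      have himg3 : Finset.image (fun t => bif t then Delay.now false
            else (some (1, true) : Delay Bool)) ({true} : Finset Bool)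
          = {Delay.now false} := by rw [Finset.image_singleton]; rfl
      simp only [Delay.map, himg3] at hE2
      rw [u1 Bool (Delay.now false)] at hE2
      simp only [Delay.map, Delay.mu, Delay.now, Delay.step, ← h1] at hE2
      have hsw := nat Bool Bool (fun b => !b) {(some (1, true) : Delay Bool), some (1, false)}
      have himg4 : Finset.image (Delay.map (fun b => !b))
          ({(some (1, true) : Delay Bool), some (1, false)} : Finset (Delay Bool))
          = {some (1, true), some (1, false)} := by
        exact (Finset.image_insert _ _ _).trans
          ((congrArg _ (Finset.image_singleton _ _)).trans (Finset.pair_comm _ _))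
      rw [himg4, hE2] at hsw
      simp only [Delay.map] at hsw
      injection hsw with hp
      injection hp with _ hq
      simpa using hq
    -- u0 = {false, true} : forces k + k = 1
    · have h1 := E1 false
      rw [inner false, hF0] at h1
      have himg : Finset.image (fun t => bif t then Delay.now false
            else Delay.step (Delay.now false)) ({false, true} : Finset Bool)
          = {Delay.now false, Delay.step (Delay.now false)} := by
        simp [Finset.pair_comm]
      simp only [Delay.map, himg] at h1
      have hG : ζ Bool {Delay.now false, Delay.step (Delay.now false)}
          = some (k, ({false} : Finset Bool)) := by
        have := key Bool (fun _ => false)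
        rw [hF0] at this
        simpa [Delay.map] using this
      rw [hG] at h1
      simp [Delay.mu] at h1
      omega
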